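/- For the complete graph K_n (n ≥ 2), N_2(K_n) = n − 1: there is a (0,1,*)-addressing of K_n of length n−1, and no shorter addressing exists. -/

import Mathlib

def isAddressing {V : Type*} (G : SimpleGraph V) (N : ℕ)
    (f : V → Fin N → Option Bool) : Prop :=
  ∀ u v : V, G.dist u v =
    (Finset.univ.filter fun j : Fin N =>
      ∃ a b : Bool, f u j = some a ∧ f v j = some b ∧ a ≠ b).card

lemma topdist (n : ℕ) (u v : Fin n) :
    (⊤ : SimpleGraph (Fin n)).dist u v = if u = v then 0 else 1 := by
  split
  · simp [*, SimpleGraph.dist_self]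
  · exact SimpleGraph.dist_eq_one_iff_adj.mpr (by simpa using ‹¬ u = v›)

lemma N2_lower (n N : ℕ) (f : Fin n → Fin N → Option Bool)
    (hf : isAddressing (⊤ : SimpleGraph (Fin n)) N f) : n - 1 ≤ N := by
  by_contra hcon
  push_neg at hcon
  set M : Matrix (Option (Fin N)) (Fin n) ℝ := fun i u => match i with
    | none => 1
    | some j => if f u j = some true then 1 else 0 with hM
  have hninj : ¬ Function.Injective M.mulVecLin := by
    intro hinj
    have := LinearMap.finrank_le_finrank_of_injective hinj
    simp [Module.finrank_pi] at this
    omega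
  rw [Function.not_injective_iff] at hninj
  obtain ⟨a, b, hab, hne⟩ := hninj
  set x : Fin n → ℝ := a - b with hx
  have hx0 : x ≠ 0 := sub_ne_zero_of_ne hne
  have hMx : M.mulVecLin x = 0 := by
    rw [hx, map_sub, hab, sub_self]
  have hsum : ∑ u, x u = 0 := by
    have := congrFun hMx none
    rw [Matrix.mulVecLin_apply] at this
    simpa [Matrix.mulVec, dotProduct, hM] using this
  have hA : ∀ j : Fin N, ∑ u, (if f u j = some true then x u else 0) = 0 := by
    intro j
    have := congrFun hMx (some j)
    rw [Matrix.mulVecLin_apply] at this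
    simpa [Matrix.mulVec, dotProduct, hM, ite_mul] using this
  set S : ℝ := ∑ u, ∑ v, x u * x v * ((⊤ : SimpleGraph (Fin n)).dist u v : ℝ) with hS
  have h1 : S = 0 := by
    rw [hS]
    have key : ∀ u v : Fin n, x u * x v * ((⊤ : SimpleGraph (Fin n)).dist u v : ℝ)
        = ∑ j : Fin N, x u * x v *
          (if (∃ a b : Bool, f u j = some a ∧ f v j = some b ∧ a ≠ b) then (1:ℝ) else 0) := by
      intro u v
      rw [← Finset.mul_sum, hf u v, Finset.card_filter]
      push_cast
      ring
    simp_rw [key]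
    have ptw : ∀ (j : Fin N) (u v : Fin n),
        x u * x v * (if (∃ a b : Bool, f u j = some a ∧ f v j = some b ∧ a ≠ b)
          then (1:ℝ) else 0)
        = (if f u j = some true then x u else 0) * (if f v j = some false then x v else 0)
          + (if f u j = some false then x u else 0) * (if f v j = some true then x v else 0) := by
      intro j u v
      rcases h1 : f u j with _ | (_ | _) <;> rcases h2 : f v j with _ | (_ | _) <;>
        simp [h1, h2]
    conv_lhs => enter [2, u]; rw [Finset.sum_comm]
    rw [Finset.sum_comm]
    refine Finset.sum_eq_zero fun j _ => ?_
    simp_rw [ptw j, Finset.sum_add_distrib]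
    rw [← Finset.sum_mul_sum, ← Finset.sum_mul_sum, hA j]
    ring
  have h2 : S = - ∑ u, x u ^ 2 := by
    rw [hS]
    have : ∀ u v : Fin n, x u * x v * ((⊤ : SimpleGraph (Fin n)).dist u v : ℝ)
        = x u * x v - (if u = v then x u * x v else 0) := by
      intro u v
      rw [topdist]
      by_cases h : u = v <;> simp [h]
    simp_rw [this, Finset.sum_sub_distrib, Finset.sum_ite_eq, Finset.mem_univ, if_true]
    rw [← Finset.sum_mul_sum, hsum]
    simp [sq]
  have hzero : ∑ u, x u ^ 2 = 0 := by
    have := h1.symm.trans h2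
    linarith
  have : x = 0 := by
    funext u
    have := (Finset.sum_eq_zero_iff_of_nonneg (fun i _ => sq_nonneg (x i))).mp hzero u
      (Finset.mem_univ u)
    exact pow_eq_zero_iff (by norm_num) |>.mp (this)
  exact hx0 this


def fK (n : ℕ) : Fin n → Fin (n - 1) → Option Bool := fun i j =>
  if (j : ℕ) + 1 < (i : ℕ) then none
  else if (j : ℕ) + 1 = (i : ℕ) then some true else some false

lemma N2_upper (n : ℕ) (hn : 2 ≤ n) :
    isAddressing (⊤ : SimpleGraph (Fin n)) (n - 1) (fK n) := by
  have main : ∀ u v : Fin n, (u : ℕ) < (v : ℕ) →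
      (Finset.univ.filter fun j : Fin (n-1) =>
        ∃ a b : Bool, fK n u j = some a ∧ fK n v j = some b ∧ a ≠ b)
      = {⟨(v : ℕ) - 1, by omega⟩} := by
    intro u v huv
    ext j
    simp only [Finset.mem_filter, Finset.mem_univ, true_and, Finset.mem_singleton]
    constructor
    · rintro ⟨a, b, h1, h2, hab⟩
      have hjv : ¬ ((j : ℕ) + 1 < (v : ℕ)) := by
        intro h
        rw [fK, if_pos h] at h2
        exact absurd h2 (by simp)
      have hju : fK n u j = some false := by
        rw [fK, if_neg (by omega), if_neg (by omega)]
      rw [hju] at h1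
      have ha : a = false := (Option.some.injEq _ _ ▸ h1).symm
      have hb : b = true := by
        cases b
        · exact absurd ha hab
        · rfl
      subst ha hb
      have : (j : ℕ) + 1 = (v : ℕ) := by
        by_contra hne
        rw [fK, if_neg hjv, if_neg hne] at h2
        simp at h2
      exact Fin.ext (show (j:ℕ) = (v:ℕ) - 1 by omega)
    · rintro rfl
      refine ⟨false, true, ?_, ?_, by decide⟩
      · rw [fK]
        simp only [Fin.val_mk]
        rw [if_neg (by omega), if_neg (by omega)]
      · rw [fK]
        simp only [Fin.val_mk]
        rw [if_neg (by omega), if_pos (by omega)]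
  have symmset : ∀ u v : Fin n,
      (Finset.univ.filter fun j : Fin (n-1) =>
        ∃ a b : Bool, fK n u j = some a ∧ fK n v j = some b ∧ a ≠ b)
      = (Finset.univ.filter fun j : Fin (n-1) =>
        ∃ a b : Bool, fK n v j = some a ∧ fK n u j = some b ∧ a ≠ b) := by
    intro u v
    ext j
    simp only [Finset.mem_filter, Finset.mem_univ, true_and]
    constructor
    · rintro ⟨a, b, h1, h2, hab⟩; exact ⟨b, a, h2, h1, hab.symm⟩
    · rintro ⟨a, b, h1, h2, hab⟩; exact ⟨b, a, h2, h1, hab.symm⟩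
  intro u v
  rw [topdist]
  by_cases h : u = v
  · subst h
    rw [if_pos rfl]
    symm
    rw [Finset.card_eq_zero, Finset.filter_eq_empty_iff]
    rintro j - ⟨a, b, h1, h2, hab⟩
    rw [h1] at h2
    exact hab (Option.some_inj.mp h2)
  · rw [if_neg h]
    rcases Nat.lt_or_ge (u : ℕ) (v : ℕ) with hlt | hge
    · rw [main u v hlt, Finset.card_singleton]
    · have hlt : (v : ℕ) < (u : ℕ) := by
        rcases Nat.lt_or_ge (v : ℕ) (u : ℕ) with h' | h'
        · exact h'
        · exact absurd (Fin.ext (le_antisymm hge h')) (Ne.symm h)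
      rw [symmset, main v u hlt, Finset.card_singleton]

theorem N2_complete (n : ℕ) (hn : 2 ≤ n) :
    (∃ f : Fin n → Fin (n - 1) → Option Bool,
      isAddressing (⊤ : SimpleGraph (Fin n)) (n - 1) f) ∧
    (∀ (N : ℕ) (f : Fin n → Fin N → Option Bool),
      isAddressing (⊤ : SimpleGraph (Fin n)) N f → n - 1 ≤ N) := by
  exact ⟨⟨fK n, N2_upper n hn⟩, fun N f hf => N2_lower n N f hf⟩
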